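/- arXiv:1605.09557 — 9 statements merged into one kernel-verified Lean document; each statement's English description precedes it below -/
import Mathlib

section
/- Let X₁, X₂, X₃ be nonempty standard Borel spaces, let μ₁, μ₂, μ₃ be Borel probability measures on X₁, X₂, X₃ respectively, let R₁₂ ⊆ X₁ × X₂ and R₂₃ ⊆ X₂ × X₃ be Borel measurable relations, and let δ_a, δ_b ∈ [0,1]. Suppose there exists a coupling W₁₂ of μ₁ and μ₂ with W₁₂(R₁₂) ≥ 1 − δ_a, and a coupling W₂₃ of μ₂ and μ₃ with W₂₃(R₂₃) ≥ 1 − δ_b. Then there exists a coupling W₁₃ of μ₁ and μ₃ such that W₁₃({(x₁,x₃) | ∃ x₂ ∈ X₂, (x₁,x₂) ∈ R₁₂ ∧ (x₂,x₃) ∈ R₂₃}) ≥ 1 − δ_a − δ_b. -/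
open MeasureTheory ProbabilityTheory

/-- `W` is a coupling of `μ` and `ν`: a probability measure on the product whose
marginals are `μ` and `ν`. -/
def IsCoupling {X₁ X₂ : Type*} [MeasurableSpace X₁] [MeasurableSpace X₂]
    (W : Measure (X₁ × X₂)) (μ : Measure X₁) (ν : Measure X₂) : Prop :=
  IsProbabilityMeasure W ∧ W.map Prod.fst = μ ∧ W.map Prod.snd = ν

/-- Composition of approximate liftings: couplings through the composite relation
with additive error in the probability deviations. -/
theorem liftedRel_comp
    {X₁ X₂ X₃ : Type*}
    [MeasurableSpace X₁] [StandardBorelSpace X₁] [Nonempty X₁]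
    [MeasurableSpace X₂] [StandardBorelSpace X₂] [Nonempty X₂]
    [MeasurableSpace X₃] [StandardBorelSpace X₃] [Nonempty X₃]
    (μ₁ : Measure X₁) (μ₂ : Measure X₂) (μ₃ : Measure X₃)
    [IsProbabilityMeasure μ₁] [IsProbabilityMeasure μ₂] [IsProbabilityMeasure μ₃]
    (R₁₂ : Set (X₁ × X₂)) (hR₁₂ : MeasurableSet R₁₂)
    (R₂₃ : Set (X₂ × X₃)) (hR₂₃ : MeasurableSet R₂₃)
    (δa δb : ℝ) (hδa0 : 0 ≤ δa) (hδa1 : δa ≤ 1) (hδb0 : 0 ≤ δb) (hδb1 : δb ≤ 1)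
    (W₁₂ : Measure (X₁ × X₂)) (hW₁₂ : IsCoupling W₁₂ μ₁ μ₂)
    (hW₁₂R : 1 - ENNReal.ofReal δa ≤ W₁₂ R₁₂)
    (W₂₃ : Measure (X₂ × X₃)) (hW₂₃ : IsCoupling W₂₃ μ₂ μ₃)
    (hW₂₃R : 1 - ENNReal.ofReal δb ≤ W₂₃ R₂₃) :
    ∃ W₁₃ : Measure (X₁ × X₃), IsCoupling W₁₃ μ₁ μ₃ ∧
      1 - ENNReal.ofReal (δa + δb) ≤
        W₁₃ {p : X₁ × X₃ | ∃ x₂ : X₂, (p.1, x₂) ∈ R₁₂ ∧ (x₂, p.2) ∈ R₂₃} := by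
  obtain ⟨hW₁₂p, hW₁₂f, hW₁₂s⟩ := hW₁₂
  obtain ⟨hW₂₃p, hW₂₃f, hW₂₃s⟩ := hW₂₃
  -- disintegrate W₁₂ (swapped) and W₂₃ over X₂
  set ρ₁ : Measure (X₂ × X₁) := W₁₂.map Prod.swap with hρ₁
  have : IsProbabilityMeasure ρ₁ := Measure.isProbabilityMeasure_map measurable_swap.aemeasurable
  set κ₁ : Kernel X₂ X₁ := ρ₁.condKernel with hκ₁
  set κ₃ : Kernel X₂ X₃ := W₂₃.condKernel with hκ₃
  have hρ₁fst : ρ₁.fst = μ₂ := by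
    rw [hρ₁, Measure.fst_map_swap, Measure.snd, hW₁₂s]
  have hW₂₃fst : W₂₃.fst = μ₂ := by rw [Measure.fst, hW₂₃f]
  have hdis₁ : μ₂ ⊗ₘ κ₁ = ρ₁ := by
    rw [hκ₁, ← hρ₁fst]; exact ρ₁.disintegrate ρ₁.condKernel
  have hdis₃ : μ₂ ⊗ₘ κ₃ = W₂₃ := by
    rw [hκ₃, ← hW₂₃fst]; exact W₂₃.disintegrate W₂₃.condKernel
  set W : Measure (X₂ × X₁ × X₃) := μ₂ ⊗ₘ (κ₁ ×ₖ κ₃) with hW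
  have hWp : IsProbabilityMeasure W := by rw [hW]; infer_instance
  have hf : Measurable (fun p : X₂ × X₁ × X₃ => (p.2.1, p.2.2)) := by fun_prop
  have hg₁ : Measurable (fun p : X₂ × X₁ × X₃ => (p.1, p.2.1)) := by fun_prop
  have hg₃ : Measurable (fun p : X₂ × X₁ × X₃ => (p.1, p.2.2)) := by fun_prop
  refine ⟨W.map (fun p => (p.2.1, p.2.2)), ⟨Measure.isProbabilityMeasure_map hf.aemeasurable, ?_, ?_⟩, ?_⟩
  · -- first marginal is μ₁
    rw [Measure.map_map measurable_fst hf]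
    have : (Prod.fst ∘ fun p : X₂ × X₁ × X₃ => (p.2.1, p.2.2)) =
        (Prod.snd ∘ fun p : X₂ × X₁ × X₃ => (p.1, p.2.1)) := rfl
    rw [this, ← Measure.map_map measurable_snd hg₁]
    have hmap : W.map (fun p : X₂ × X₁ × X₃ => (p.1, p.2.1)) = μ₂ ⊗ₘ κ₁ := by
      ext s hs
      rw [Measure.map_apply (hg₁) hs,
        hW, Measure.compProd_apply (hs.preimage hg₁), Measure.compProd_apply hs]
      refine lintegral_congr fun x₂ => ?_
      rw [Kernel.prod_apply]
      have : (Prod.mk x₂ ⁻¹' ((fun p : X₂ × X₁ × X₃ => (p.1, p.2.1)) ⁻¹' s)) =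
          (Prod.mk x₂ ⁻¹' s) ×ˢ Set.univ := by
        ext q; simp [Set.mem_prod]
      rw [this, Measure.prod_prod, measure_univ, mul_one]
    rw [hmap, hdis₁, hρ₁, Measure.map_map measurable_snd measurable_swap]
    have : (Prod.snd ∘ (Prod.swap : X₁ × X₂ → X₂ × X₁)) = Prod.fst := rfl
    rw [this, hW₁₂f]
  · -- second marginal is μ₃
    rw [Measure.map_map measurable_snd hf]
    have : (Prod.snd ∘ fun p : X₂ × X₁ × X₃ => (p.2.1, p.2.2)) =
        (Prod.snd ∘ fun p : X₂ × X₁ × X₃ => (p.1, p.2.2)) := rfl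
    rw [this, ← Measure.map_map measurable_snd hg₃]
    have hmap : W.map (fun p : X₂ × X₁ × X₃ => (p.1, p.2.2)) = μ₂ ⊗ₘ κ₃ := by
      ext s hs
      rw [Measure.map_apply (hg₃) hs,
        hW, Measure.compProd_apply (hs.preimage hg₃), Measure.compProd_apply hs]
      refine lintegral_congr fun x₂ => ?_
      rw [Kernel.prod_apply]
      have : (Prod.mk x₂ ⁻¹' ((fun p : X₂ × X₁ × X₃ => (p.1, p.2.2)) ⁻¹' s)) =
          Set.univ ×ˢ (Prod.mk x₂ ⁻¹' s) := by
        ext q; simp [Set.mem_prod]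
      rw [this, Measure.prod_prod, measure_univ, one_mul]
    rw [hmap, hdis₃]; exact hW₂₃s
  · -- the probability bound
    set S : Set (X₂ × X₁ × X₃) :=
      {p | (p.2.1, p.1) ∈ R₁₂ ∧ (p.1, p.2.2) ∈ R₂₃} with hS
    have hSm : MeasurableSet S := by
      refine MeasurableSet.inter ?_ ?_
      · exact hR₁₂.preimage (measurable_snd.fst.prodMk measurable_fst)
      · exact hR₂₃.preimage (hg₃)
    -- W of the "bad" sets
    have hA : W {p : X₂ × X₁ × X₃ | (p.2.1, p.1) ∉ R₁₂} = W₁₂ R₁₂ᶜ := by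
      have hAm : MeasurableSet {p : X₂ × X₁ × X₃ | (p.2.1, p.1) ∉ R₁₂} :=
        (hR₁₂.compl).preimage (measurable_snd.fst.prodMk measurable_fst)
      have hCm : MeasurableSet ((Prod.swap : X₂ × X₁ → X₁ × X₂) ⁻¹' R₁₂ᶜ) :=
        (hR₁₂.compl).preimage measurable_swap
      rw [hW, Measure.compProd_apply hAm]
      have : W₁₂ R₁₂ᶜ = (μ₂ ⊗ₘ κ₁) ((Prod.swap : X₂ × X₁ → X₁ × X₂) ⁻¹' R₁₂ᶜ) := by
        rw [hdis₁, hρ₁, Measure.map_apply measurable_swap hCm]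
        simp [Set.preimage_preimage]
      rw [this, Measure.compProd_apply hCm]
      refine lintegral_congr fun x₂ => ?_
      rw [Kernel.prod_apply]
      have : (Prod.mk x₂ ⁻¹' {p : X₂ × X₁ × X₃ | (p.2.1, p.1) ∉ R₁₂}) =
          (Prod.mk x₂ ⁻¹' ((Prod.swap : X₂ × X₁ → X₁ × X₂) ⁻¹' R₁₂ᶜ)) ×ˢ Set.univ := by
        ext q; simp [Prod.swap]
      rw [this, Measure.prod_prod, measure_univ, mul_one]
    have hB : W {p : X₂ × X₁ × X₃ | (p.1, p.2.2) ∉ R₂₃} = W₂₃ R₂₃ᶜ := by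
      have hBm : MeasurableSet {p : X₂ × X₁ × X₃ | (p.1, p.2.2) ∉ R₂₃} :=
        (hR₂₃.compl).preimage (hg₃)
      rw [hW, Measure.compProd_apply hBm, ← hdis₃, Measure.compProd_apply hR₂₃.compl]
      refine lintegral_congr fun x₂ => ?_
      rw [Kernel.prod_apply]
      have : (Prod.mk x₂ ⁻¹' {p : X₂ × X₁ × X₃ | (p.1, p.2.2) ∉ R₂₃}) =
          Set.univ ×ˢ (Prod.mk x₂ ⁻¹' R₂₃ᶜ) := by
        ext q; simp
      rw [this, Measure.prod_prod, measure_univ, one_mul]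
    have hW₁₂c : W₁₂ R₁₂ᶜ ≤ ENNReal.ofReal δa := by
      have h1 : W₁₂ R₁₂ᶜ = 1 - W₁₂ R₁₂ := by
        rw [prob_compl_eq_one_sub hR₁₂]
      rw [h1]
      calc 1 - W₁₂ R₁₂ ≤ 1 - (1 - ENNReal.ofReal δa) := tsub_le_tsub_left hW₁₂R 1
        _ ≤ ENNReal.ofReal δa := by
            rw [ENNReal.sub_sub_cancel ENNReal.one_ne_top (ENNReal.ofReal_le_one.2 hδa1)]
    have hW₂₃c : W₂₃ R₂₃ᶜ ≤ ENNReal.ofReal δb := by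
      have h1 : W₂₃ R₂₃ᶜ = 1 - W₂₃ R₂₃ := by
        rw [prob_compl_eq_one_sub hR₂₃]
      rw [h1]
      calc 1 - W₂₃ R₂₃ ≤ 1 - (1 - ENNReal.ofReal δb) := tsub_le_tsub_left hW₂₃R 1
        _ ≤ ENNReal.ofReal δb := by
            rw [ENNReal.sub_sub_cancel ENNReal.one_ne_top (ENNReal.ofReal_le_one.2 hδb1)]
    have hScompl : W Sᶜ ≤ ENNReal.ofReal (δa + δb) := by
      have hsub : Sᶜ ⊆ {p : X₂ × X₁ × X₃ | (p.2.1, p.1) ∉ R₁₂} ∪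
          {p : X₂ × X₁ × X₃ | (p.1, p.2.2) ∉ R₂₃} := by
        intro p hp
        rw [hS] at hp
        simp only [Set.mem_compl_iff, Set.mem_setOf_eq, not_and_or] at hp
        exact hp
      calc W Sᶜ ≤ W ({p : X₂ × X₁ × X₃ | (p.2.1, p.1) ∉ R₁₂} ∪
            {p : X₂ × X₁ × X₃ | (p.1, p.2.2) ∉ R₂₃}) := measure_mono hsub
        _ ≤ W {p : X₂ × X₁ × X₃ | (p.2.1, p.1) ∉ R₁₂} +
            W {p : X₂ × X₁ × X₃ | (p.1, p.2.2) ∉ R₂₃} := measure_union_le _ _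
        _ ≤ ENNReal.ofReal δa + ENNReal.ofReal δb := by
            rw [hA, hB]; exact add_le_add hW₁₂c hW₂₃c
        _ = ENNReal.ofReal (δa + δb) := (ENNReal.ofReal_add hδa0 hδb0).symm
    have hWS : 1 - ENNReal.ofReal (δa + δb) ≤ W S := by
      rw [tsub_le_iff_right]
      calc (1 : ENNReal) = W S + W Sᶜ := by rw [measure_add_measure_compl hSm, measure_univ]
        _ ≤ W S + ENNReal.ofReal (δa + δb) := add_le_add_right hScompl _
    refine hWS.trans ?_
    refine (measure_mono ?_).trans (Measure.le_map_apply hf.aemeasurable _)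
    intro p hp
    exact ⟨p.1, hp.1, hp.2⟩
end

section
/- Let X₁, X₂, Q be nonempty standard Borel spaces, let f₁ : X₁ → Q and f₂ : X₂ → Q be measurable surjections, let Δ, Θ be Borel probability measures on X₁, X₂ respectively, and let δ ∈ [0,1]. Then the following are equivalent: (i) for every measurable set B ⊆ Q, Δ(f₁⁻¹(B)) ≤ Θ(f₂⁻¹(B)) + δ and Θ(f₂⁻¹(B)) ≤ Δ(f₁⁻¹(B)) + δ; (ii) there exists a coupling W of Δ and Θ with W({(x₁,x₂) | f₁(x₁) = f₂(x₂)}) ≥ 1 − δ. -/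
open MeasureTheory

open ProbabilityTheory

/-- Disintegration of a probability measure along a measurable map into a standard Borel
space: a Markov kernel which is a.e. concentrated on the fibres and reconstitutes the
measure. -/
lemma exists_disintegration {X Q : Type*} [MeasurableSpace X] [StandardBorelSpace X] [Nonempty X]
    [MeasurableSpace Q] [StandardBorelSpace Q]
    (f : X → Q) (hf : Measurable f) (Δ : Measure X) [IsProbabilityMeasure Δ] :
    ∃ κ : Kernel Q X, IsMarkovKernel κ ∧
      (∀ᵐ q ∂(Δ.map f), κ q {x | f x = q} = 1) ∧
      (Δ.map f).bind κ = Δ := by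
  letI := upgradeStandardBorel Q
  have hm : Measurable fun x => (f x, x) := hf.prodMk measurable_id
  set ρ : Measure (Q × X) := Δ.map (fun x => (f x, x)) with hρ
  have hρprob : IsProbabilityMeasure ρ := Measure.isProbabilityMeasure_map hm.aemeasurable
  have hfst : ρ.fst = Δ.map f := Measure.fst_map_prodMk measurable_id
  have hG : MeasurableSet {p : Q × X | f p.2 = p.1} := by
    have hdiag : MeasurableSet {q : Q × Q | q.1 = q.2} :=
      isClosed_eq continuous_fst continuous_snd |>.measurableSet
    exact ((hf.comp measurable_snd).prodMk measurable_fst) hdiag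
  have hdis : ρ.fst ⊗ₘ ρ.condKernel = ρ := ρ.disintegrate _
  have hρG : ρ {p : Q × X | f p.2 = p.1} = 1 := by
    rw [hρ, Measure.map_apply hm hG]
    have : (fun x => (f x, x)) ⁻¹' {p : Q × X | f p.2 = p.1} = Set.univ := by
      ext x; simp
    rw [this, measure_univ]
  set g : Q → ENNReal := fun q => ρ.condKernel q {x | f x = q} with hg
  have hgm : Measurable g :=
    Kernel.measurable_kernel_prodMk_left (κ := ρ.condKernel) hG
  have h1 : ∫⁻ q, g q ∂ρ.fst = 1 := by
    have := Measure.compProd_apply (μ := ρ.fst) (κ := ρ.condKernel) hG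
    rw [hdis, hρG] at this
    exact this.symm
  have hle : ∀ q, g q ≤ 1 := fun q => by
    haveI : IsProbabilityMeasure (ρ.condKernel q) :=
      IsMarkovKernel.isProbabilityMeasure q
    exact prob_le_one
  have hae : ∀ᵐ q ∂ρ.fst, g q = 1 := by
    have hsub : ∫⁻ q, (1 - g q) ∂ρ.fst = 0 := by
      rw [lintegral_sub hgm (by rw [h1]; exact ENNReal.one_ne_top)
        (Filter.Eventually.of_forall hle), lintegral_one, measure_univ, h1, tsub_self]
    have := (lintegral_eq_zero_iff (measurable_const.sub hgm)).mp hsub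
    filter_upwards [this] with q hq
    have : (1 : ENNReal) - g q = 0 := hq
    exact le_antisymm (hle q) (tsub_eq_zero_iff_le.mp this)
  have hbind : (Δ.map f).bind ρ.condKernel = Δ := by
    have hsnd : ρ.snd = Δ := by
      rw [hρ, Measure.snd_map_prodMk hf, Measure.map_id']
    ext s hs
    rw [Measure.bind_apply hs (Kernel.measurable _).aemeasurable]
    have h2 : ρ.snd s = ∫⁻ q, ρ.condKernel q (Prod.mk q ⁻¹' (Prod.snd ⁻¹' s)) ∂ρ.fst := by
      rw [Measure.snd_apply hs]
      conv_lhs => rw [← hdis]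
      exact Measure.compProd_apply (measurable_snd hs)
    calc ∫⁻ a, ρ.condKernel a s ∂(Measure.map f Δ)
        = ρ.snd s := by
          rw [h2, hfst]
          exact lintegral_congr fun q => by congr 1
      _ = Δ s := by rw [hsnd]
  exact ⟨ρ.condKernel, inferInstance, hfst ▸ hae, hbind⟩

/-- Mass of the bind of a measure with a Markov kernel. -/
lemma bind_kernel_univ {Q Z : Type*} [MeasurableSpace Q] [MeasurableSpace Z]
    (m : Measure Q) (κ : Kernel Q Z) [IsMarkovKernel κ] :
    m.bind κ Set.univ = m Set.univ := by
  rw [Measure.bind_apply MeasurableSet.univ (Kernel.measurable _).aemeasurable]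
  simp

/-- For quotient maps `f₁, f₂` into a common standard Borel space, δ-equivalence of the
pushforward measures on every measurable set is equivalent to the existence of a coupling
putting mass at least `1 - δ` on the relation `{(x₁, x₂) | f₁ x₁ = f₂ x₂}`
(Theorem on δ-lifting vs. δ-equivalence). -/
theorem approxEquiv_iff_liftedRel
    {X₁ X₂ Q : Type*}
    [MeasurableSpace X₁] [StandardBorelSpace X₁] [Nonempty X₁]
    [MeasurableSpace X₂] [StandardBorelSpace X₂] [Nonempty X₂]
    [MeasurableSpace Q] [StandardBorelSpace Q] [Nonempty Q]
    (f₁ : X₁ → Q) (f₂ : X₂ → Q)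
    (hf₁ : Measurable f₁) (hf₂ : Measurable f₂)
    (hs₁ : Function.Surjective f₁) (hs₂ : Function.Surjective f₂)
    (Δ : Measure X₁) (Θ : Measure X₂)
    [IsProbabilityMeasure Δ] [IsProbabilityMeasure Θ]
    (δ : ℝ) (hδ0 : 0 ≤ δ) (hδ1 : δ ≤ 1) :
    (∀ B : Set Q, MeasurableSet B →
        Δ (f₁ ⁻¹' B) ≤ Θ (f₂ ⁻¹' B) + ENNReal.ofReal δ ∧
        Θ (f₂ ⁻¹' B) ≤ Δ (f₁ ⁻¹' B) + ENNReal.ofReal δ) ↔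
    (∃ W : Measure (X₁ × X₂), IsCoupling W Δ Θ ∧
        1 - ENNReal.ofReal δ ≤ W {p : X₁ × X₂ | f₁ p.1 = f₂ p.2}) := by
  have hR : MeasurableSet {p : X₁ × X₂ | f₁ p.1 = f₂ p.2} := by
    letI := upgradeStandardBorel Q
    have hdiag : MeasurableSet {q : Q × Q | q.1 = q.2} :=
      isClosed_eq continuous_fst continuous_snd |>.measurableSet
    exact ((hf₁.comp measurable_fst).prodMk (hf₂.comp measurable_snd)) hdiag
  constructor
  · -- hard direction: construct the coupling
    intro hB
    set μ₁ : Measure Q := Δ.map f₁ with hμ₁def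
    set μ₂ : Measure Q := Θ.map f₂ with hμ₂def
    haveI : IsProbabilityMeasure μ₁ := Measure.isProbabilityMeasure_map hf₁.aemeasurable
    haveI : IsProbabilityMeasure μ₂ := Measure.isProbabilityMeasure_map hf₂.aemeasurable
    obtain ⟨S, hS, hSle, hScle⟩ := hahn_decomposition (μ := μ₁) (ν := μ₂)
    set ν : Measure Q := μ₂.restrict S + μ₁.restrict Sᶜ with hνdef
    have hν₁ : ν ≤ μ₁ := by
      rw [Measure.le_iff]
      intro s hs
      rw [Measure.add_apply, Measure.restrict_apply hs, Measure.restrict_apply hs]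
      calc μ₂ (s ∩ S) + μ₁ (s ∩ Sᶜ)
          ≤ μ₁ (s ∩ S) + μ₁ (s ∩ Sᶜ) :=
            add_le_add_left (hSle _ (hs.inter hS) Set.inter_subset_right) _
        _ = μ₁ s := by
            rw [← Set.diff_eq, measure_inter_add_diff s hS]
    have hν₂ : ν ≤ μ₂ := by
      rw [Measure.le_iff]
      intro s hs
      rw [Measure.add_apply, Measure.restrict_apply hs, Measure.restrict_apply hs]
      calc μ₂ (s ∩ S) + μ₁ (s ∩ Sᶜ)
          ≤ μ₂ (s ∩ S) + μ₂ (s ∩ Sᶜ) :=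
            add_le_add_right (hScle _ (hs.inter hS.compl) Set.inter_subset_right) _
        _ = μ₂ s := by
            rw [← Set.diff_eq, measure_inter_add_diff s hS]
    haveI : IsFiniteMeasure ν := by
      rw [hνdef]; infer_instance
    set ρ₁ : Measure Q := μ₁ - ν with hρ₁def
    set ρ₂ : Measure Q := μ₂ - ν with hρ₂def
    have hρ₁ : ρ₁ + ν = μ₁ := Measure.sub_add_cancel_of_le hν₁
    have hρ₂ : ρ₂ + ν = μ₂ := Measure.sub_add_cancel_of_le hν₂
    set ε : ENNReal := ρ₁ Set.univ with hεdef
    have h1' : ε + ν Set.univ = 1 := by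
      rw [hεdef, ← Measure.add_apply, hρ₁, measure_univ]
    have h2' : ρ₂ Set.univ + ν Set.univ = 1 := by
      rw [← Measure.add_apply, hρ₂, measure_univ]
    have hνfin : ν Set.univ ≠ ⊤ := measure_ne_top ν _
    have hεle : ε ≤ 1 := h1' ▸ self_le_add_right ε (ν Set.univ)
    have hεtop : ε ≠ ⊤ := (hεle.trans_lt ENNReal.one_lt_top).ne
    have hε₂ : ρ₂ Set.univ = ε :=
      (ENNReal.add_left_inj hνfin).mp (h2'.trans h1'.symm)
    have hνuniv : 1 - ENNReal.ofReal δ ≤ ν Set.univ := by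
      rw [tsub_le_iff_right]
      have hνun : ν Set.univ = μ₂ S + μ₁ Sᶜ := by
        rw [hνdef, Measure.add_apply, Measure.restrict_apply_univ, Measure.restrict_apply_univ]
      have hBS : μ₁ S ≤ μ₂ S + ENNReal.ofReal δ := by
        have := (hB S hS).1
        rwa [← Measure.map_apply hf₁ hS, ← Measure.map_apply hf₂ hS] at this
      calc (1 : ENNReal) = μ₁ Set.univ := measure_univ.symm
        _ = μ₁ S + μ₁ Sᶜ := (measure_add_measure_compl hS).symm
        _ ≤ (μ₂ S + ENNReal.ofReal δ) + μ₁ Sᶜ := add_le_add_left hBS _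
        _ = ν Set.univ + ENNReal.ofReal δ := by rw [hνun]; ring
    obtain ⟨κ₁, hκ₁M, hκ₁ae, hκ₁bind⟩ := exists_disintegration f₁ hf₁ Δ
    obtain ⟨κ₂, hκ₂M, hκ₂ae, hκ₂bind⟩ := exists_disintegration f₂ hf₂ Θ
    set K : Kernel Q (X₁ × X₂) := κ₁ ×ₖ κ₂ with hKdef
    haveI : IsMarkovKernel K := by rw [hKdef]; infer_instance
    set α₁ : Measure X₁ := ρ₁.bind κ₁ with hα₁def
    set α₂ : Measure X₂ := ρ₂.bind κ₂ with hα₂def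
    have hα₁univ : α₁ Set.univ = ε := by rw [hα₁def, bind_kernel_univ, hεdef]
    have hα₂univ : α₂ Set.univ = ε := by rw [hα₂def, bind_kernel_univ, hε₂]
    haveI : IsFiniteMeasure α₁ :=
      ⟨by rw [hα₁univ]; exact hεle.trans_lt ENNReal.one_lt_top⟩
    haveI : IsFiniteMeasure α₂ :=
      ⟨by rw [hα₂univ]; exact hεle.trans_lt ENNReal.one_lt_top⟩
    set W : Measure (X₁ × X₂) := ν.bind K + ε⁻¹ • (α₁.prod α₂) with hWdef
    -- marginals
    have hcancel : ∀ a : ENNReal, a ≤ ε → ε⁻¹ * (a * ε) = a := by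
      intro a ha
      rcases eq_or_ne ε 0 with h0 | h0
      · have : a = 0 := le_antisymm (h0 ▸ ha) zero_le
        simp [this]
      · rw [mul_comm a ε, ← mul_assoc, ENNReal.inv_mul_cancel h0 hεtop, one_mul]
    have hWfst : W.map Prod.fst = Δ := by
      ext s hs
      rw [Measure.map_apply measurable_fst hs, hWdef, Measure.add_apply,
        Measure.smul_apply, smul_eq_mul]
      have hsm : MeasurableSet (Prod.fst ⁻¹' s : Set (X₁ × X₂)) := measurable_fst hs
      have t1 : ν.bind K (Prod.fst ⁻¹' s) = ∫⁻ q, κ₁ q s ∂ν := by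
        rw [Measure.bind_apply hsm (Kernel.measurable _).aemeasurable]
        refine lintegral_congr fun q => ?_
        haveI : IsProbabilityMeasure (κ₂ q) := IsMarkovKernel.isProbabilityMeasure q
        rw [hKdef, Kernel.prod_apply, ← Set.prod_univ, Measure.prod_prod, measure_univ,
          mul_one]
      have t2 : (α₁.prod α₂) (Prod.fst ⁻¹' s) = α₁ s * ε := by
        rw [← Set.prod_univ, Measure.prod_prod, hα₂univ]
      have hα₁s : α₁ s ≤ ε := hα₁univ ▸ measure_mono (Set.subset_univ s)
      rw [t1, t2, hcancel (α₁ s) hα₁s]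
      have hΔs : Δ s = ∫⁻ q, κ₁ q s ∂μ₁ := by
        rw [← hκ₁bind, Measure.bind_apply hs (Kernel.measurable _).aemeasurable]
      have hsplit : ∫⁻ q, κ₁ q s ∂μ₁ = ∫⁻ q, κ₁ q s ∂ρ₁ + ∫⁻ q, κ₁ q s ∂ν := by
        conv_lhs => rw [← hρ₁]
        exact lintegral_add_measure _ ρ₁ ν
      rw [hΔs, hsplit, hα₁def, Measure.bind_apply hs (Kernel.measurable _).aemeasurable, add_comm]
    have hWsnd : W.map Prod.snd = Θ := by
      ext s hs
      rw [Measure.map_apply measurable_snd hs, hWdef, Measure.add_apply,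
        Measure.smul_apply, smul_eq_mul]
      have hsm : MeasurableSet (Prod.snd ⁻¹' s : Set (X₁ × X₂)) := measurable_snd hs
      have t1 : ν.bind K (Prod.snd ⁻¹' s) = ∫⁻ q, κ₂ q s ∂ν := by
        rw [Measure.bind_apply hsm (Kernel.measurable _).aemeasurable]
        refine lintegral_congr fun q => ?_
        haveI : IsProbabilityMeasure (κ₁ q) := IsMarkovKernel.isProbabilityMeasure q
        rw [hKdef, Kernel.prod_apply, ← Set.univ_prod, Measure.prod_prod, measure_univ,
          one_mul]
      have t2 : (α₁.prod α₂) (Prod.snd ⁻¹' s) = α₂ s * ε := by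
        rw [← Set.univ_prod, Measure.prod_prod, hα₁univ, mul_comm]
      have hα₂s : α₂ s ≤ ε := hα₂univ ▸ measure_mono (Set.subset_univ s)
      rw [t1, t2, hcancel (α₂ s) hα₂s]
      have hΘs : Θ s = ∫⁻ q, κ₂ q s ∂μ₂ := by
        rw [← hκ₂bind, Measure.bind_apply hs (Kernel.measurable _).aemeasurable]
      have hsplit : ∫⁻ q, κ₂ q s ∂μ₂ = ∫⁻ q, κ₂ q s ∂ρ₂ + ∫⁻ q, κ₂ q s ∂ν := by
        conv_lhs => rw [← hρ₂]
        exact lintegral_add_measure _ ρ₂ ν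
      rw [hΘs, hsplit, hα₂def, Measure.bind_apply hs (Kernel.measurable _).aemeasurable, add_comm]
    haveI hWprob : IsProbabilityMeasure W := by
      constructor
      have := congrArg (fun m : Measure X₁ => m Set.univ) hWfst
      simpa [Measure.map_apply measurable_fst MeasurableSet.univ] using this
    have hK1 : ∀ᵐ q ∂ν, K q {p : X₁ × X₂ | f₁ p.1 = f₂ p.2} = 1 := by
      have e₁ : ∀ᵐ q ∂ν, κ₁ q {x | f₁ x = q} = 1 :=
        hκ₁ae.filter_mono (ae_mono hν₁)
      have e₂ : ∀ᵐ q ∂ν, κ₂ q {x | f₂ x = q} = 1 :=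
        hκ₂ae.filter_mono (ae_mono hν₂)
      filter_upwards [e₁, e₂] with q h1 h2
      haveI : IsProbabilityMeasure (K q) := IsMarkovKernel.isProbabilityMeasure q
      refine le_antisymm prob_le_one ?_
      calc (1 : ENNReal) = κ₁ q {x | f₁ x = q} * κ₂ q {x | f₂ x = q} := by
            rw [h1, h2, one_mul]
        _ = (κ₁ q).prod (κ₂ q) ({x | f₁ x = q} ×ˢ {x | f₂ x = q}) :=
            (Measure.prod_prod _ _).symm
        _ ≤ K q {p : X₁ × X₂ | f₁ p.1 = f₂ p.2} := by
            rw [hKdef, Kernel.prod_apply]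
            exact measure_mono fun p hp => hp.1.trans hp.2.symm
    have hWR : ν Set.univ ≤ W {p : X₁ × X₂ | f₁ p.1 = f₂ p.2} := by
      have hint : ∫⁻ q, K q {p : X₁ × X₂ | f₁ p.1 = f₂ p.2} ∂ν = ν Set.univ := by
        rw [lintegral_congr_ae (hK1.mono fun q h => h), lintegral_one]
      calc ν Set.univ = ν.bind K {p : X₁ × X₂ | f₁ p.1 = f₂ p.2} := by
            rw [Measure.bind_apply hR (Kernel.measurable _).aemeasurable, hint]
        _ ≤ W {p : X₁ × X₂ | f₁ p.1 = f₂ p.2} := by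
            rw [hWdef, Measure.add_apply]
            exact self_le_add_right _ _
    exact ⟨W, ⟨hWprob, hWfst, hWsnd⟩, hνuniv.trans hWR⟩
  · rintro ⟨W, ⟨hWprob, hWfst, hWsnd⟩, hWR⟩
    intro B hBmeas
    haveI := hWprob
    have hRc : W {p : X₁ × X₂ | f₁ p.1 = f₂ p.2}ᶜ ≤ ENNReal.ofReal δ := by
      rw [prob_compl_eq_one_sub hR]
      calc 1 - W {p : X₁ × X₂ | f₁ p.1 = f₂ p.2}
          ≤ 1 - (1 - ENNReal.ofReal δ) := tsub_le_tsub_left hWR 1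
        _ = ENNReal.ofReal δ := ENNReal.sub_sub_cancel ENNReal.one_ne_top
            (ENNReal.ofReal_le_one.mpr hδ1)
    have hsub₁ : Prod.fst ⁻¹' (f₁ ⁻¹' B) ⊆
        (Prod.snd ⁻¹' (f₂ ⁻¹' B)) ∪ {p : X₁ × X₂ | f₁ p.1 = f₂ p.2}ᶜ := by
      rintro ⟨x₁, x₂⟩ hx
      by_cases h : f₁ x₁ = f₂ x₂
      · exact Or.inl (by simpa [← h] using hx)
      · exact Or.inr h
    have hsub₂ : Prod.snd ⁻¹' (f₂ ⁻¹' B) ⊆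
        (Prod.fst ⁻¹' (f₁ ⁻¹' B)) ∪ {p : X₁ × X₂ | f₁ p.1 = f₂ p.2}ᶜ := by
      rintro ⟨x₁, x₂⟩ hx
      by_cases h : f₁ x₁ = f₂ x₂
      · exact Or.inl (by simpa [h] using hx)
      · exact Or.inr h
    rw [← hWfst, ← hWsnd, Measure.map_apply measurable_fst (hf₁ hBmeas),
      Measure.map_apply measurable_snd (hf₂ hBmeas)]
    constructor
    · calc W (Prod.fst ⁻¹' (f₁ ⁻¹' B))
          ≤ W ((Prod.snd ⁻¹' (f₂ ⁻¹' B)) ∪ {p : X₁ × X₂ | f₁ p.1 = f₂ p.2}ᶜ) :=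
            measure_mono hsub₁
        _ ≤ W (Prod.snd ⁻¹' (f₂ ⁻¹' B)) + W {p : X₁ × X₂ | f₁ p.1 = f₂ p.2}ᶜ :=
            measure_union_le _ _
        _ ≤ W (Prod.snd ⁻¹' (f₂ ⁻¹' B)) + ENNReal.ofReal δ := add_le_add_right hRc _
    · calc W (Prod.snd ⁻¹' (f₂ ⁻¹' B))
          ≤ W ((Prod.fst ⁻¹' (f₁ ⁻¹' B)) ∪ {p : X₁ × X₂ | f₁ p.1 = f₂ p.2}ᶜ) :=
            measure_mono hsub₂
        _ ≤ W (Prod.fst ⁻¹' (f₁ ⁻¹' B)) + W {p : X₁ × X₂ | f₁ p.1 = f₂ p.2}ᶜ :=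
            measure_union_le _ _
        _ ≤ W (Prod.fst ⁻¹' (f₁ ⁻¹' B)) + ENNReal.ofReal δ := add_le_add_right hRc _
end

section
/- Let X₁, X₂, Q be nonempty standard Borel spaces, let f₁ : X₁ → Q and f₂ : X₂ → Q be measurable surjections, and let Δ, Θ be Borel probability measures on X₁, X₂ respectively. Then the following are equivalent: (i) for every measurable set B ⊆ Q, Δ(f₁⁻¹(B)) = Θ(f₂⁻¹(B)); (ii) there exists a coupling W of Δ and Θ with W({(x₁,x₂) | f₁(x₁) = f₂(x₂)}) = 1. -/
open MeasureTheory
open ProbabilityTheory Set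

/-- For quotient maps `f₁, f₂` into a common standard Borel space, exact equivalence of
the pushforward measures on every measurable set is equivalent to the existence of a
coupling putting full mass on the relation `{(x₁, x₂) | f₁ x₁ = f₂ x₂}`
(exact lifting vs. exact equivalence, Claim on probabilistic bisimulation). -/
theorem equiv_iff_exactLiftedRel
    {X₁ X₂ Q : Type*}
    [MeasurableSpace X₁] [StandardBorelSpace X₁] [Nonempty X₁]
    [MeasurableSpace X₂] [StandardBorelSpace X₂] [Nonempty X₂]
    [MeasurableSpace Q] [StandardBorelSpace Q] [Nonempty Q]
    (f₁ : X₁ → Q) (f₂ : X₂ → Q)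
    (hf₁ : Measurable f₁) (hf₂ : Measurable f₂)
    (hs₁ : Function.Surjective f₁) (hs₂ : Function.Surjective f₂)
    (Δ : Measure X₁) (Θ : Measure X₂)
    [IsProbabilityMeasure Δ] [IsProbabilityMeasure Θ] :
    (∀ B : Set Q, MeasurableSet B → Δ (f₁ ⁻¹' B) = Θ (f₂ ⁻¹' B)) ↔
    (∃ W : Measure (X₁ × X₂), IsCoupling W Δ Θ ∧
        W {p : X₁ × X₂ | f₁ p.1 = f₂ p.2} = 1) := by
  unfold IsCoupling
  letI := upgradeStandardBorel Q
  have hdiag : MeasurableSet (Set.diagonal Q) := isClosed_diagonal.measurableSet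
  have hS : MeasurableSet {p : X₁ × X₂ | f₁ p.1 = f₂ p.2} :=
    ((hf₁.comp measurable_fst).prodMk (hf₂.comp measurable_snd)) hdiag
  constructor
  · intro h
    set ρ₁ : Measure (Q × X₁) := Δ.map (fun x => (f₁ x, x)) with hρ₁
    set ρ₂ : Measure (Q × X₂) := Θ.map (fun x => (f₂ x, x)) with hρ₂
    have hm₁ : Measurable (fun x : X₁ => (f₁ x, x)) := hf₁.prodMk measurable_id
    have hm₂ : Measurable (fun x : X₂ => (f₂ x, x)) := hf₂.prodMk measurable_id
    haveI : IsProbabilityMeasure ρ₁ := Measure.isProbabilityMeasure_map hm₁.aemeasurable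
    haveI : IsProbabilityMeasure ρ₂ := Measure.isProbabilityMeasure_map hm₂.aemeasurable
    set μ : Measure Q := Δ.map f₁ with hμ
    haveI : IsProbabilityMeasure μ := Measure.isProbabilityMeasure_map hf₁.aemeasurable
    have hfst₁ : ρ₁.fst = μ := by
      ext B hB
      rw [Measure.fst_apply hB, Measure.map_apply hm₁ (measurable_fst hB),
        Measure.map_apply hf₁ hB]
      rfl
    have hfst₂ : ρ₂.fst = μ := by
      ext B hB
      rw [Measure.fst_apply hB, Measure.map_apply hm₂ (measurable_fst hB),
        Measure.map_apply hf₁ hB]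
      exact ((h B hB).symm : Θ (f₂ ⁻¹' B) = _)
    set κ₁ := ρ₁.condKernel with hκ₁
    set κ₂ := ρ₂.condKernel with hκ₂
    have hd₁ : μ ⊗ₘ κ₁ = ρ₁ := by rw [← hfst₁]; exact ρ₁.disintegrate ρ₁.condKernel
    have hd₂ : μ ⊗ₘ κ₂ = ρ₂ := by rw [← hfst₂]; exact ρ₂.disintegrate ρ₂.condKernel
    set W : Measure (X₁ × X₂) := (μ ⊗ₘ (κ₁ ×ₖ κ₂)).snd with hW
    haveI : IsProbabilityMeasure W := by rw [hW]; infer_instance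
    have hT₁ : MeasurableSet {p : Q × X₁ | p.1 = f₁ p.2} :=
      (measurable_fst.prodMk (hf₁.comp measurable_snd)) hdiag
    have hT₂ : MeasurableSet {p : Q × X₂ | p.1 = f₂ p.2} :=
      (measurable_fst.prodMk (hf₂.comp measurable_snd)) hdiag
    have hae₁ : ∀ᵐ q ∂μ, κ₁ q {x | ¬ q = f₁ x} = 0 := by
      have h0 : (μ ⊗ₘ κ₁) {p : Q × X₁ | p.1 = f₁ p.2}ᶜ = 0 := by
        have he : (fun x : X₁ => (f₁ x, x)) ⁻¹' {p : Q × X₁ | p.1 = f₁ p.2}ᶜ = ∅ := by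
          ext x; simp
        rw [hd₁, hρ₁, Measure.map_apply hm₁ hT₁.compl, he, measure_empty]
      rw [Measure.compProd_apply hT₁.compl] at h0
      have hmeas := Kernel.measurable_kernel_prodMk_left (κ := κ₁) hT₁.compl
      rw [lintegral_eq_zero_iff hmeas] at h0
      filter_upwards [h0] with q hq
      exact hq
    have hae₂ : ∀ᵐ q ∂μ, κ₂ q {x | ¬ q = f₂ x} = 0 := by
      have h0 : (μ ⊗ₘ κ₂) {p : Q × X₂ | p.1 = f₂ p.2}ᶜ = 0 := by
        have he : (fun x : X₂ => (f₂ x, x)) ⁻¹' {p : Q × X₂ | p.1 = f₂ p.2}ᶜ = ∅ := by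
          ext x; simp
        rw [hd₂, hρ₂, Measure.map_apply hm₂ hT₂.compl, he, measure_empty]
      rw [Measure.compProd_apply hT₂.compl] at h0
      have hmeas := Kernel.measurable_kernel_prodMk_left (κ := κ₂) hT₂.compl
      rw [lintegral_eq_zero_iff hmeas] at h0
      filter_upwards [h0] with q hq
      exact hq
    have hWS : W {p : X₁ × X₂ | f₁ p.1 = f₂ p.2} = 1 := by
      rw [hW, Measure.snd_apply hS, Measure.compProd_apply (measurable_snd hS)]
      have hone : ∀ᵐ q ∂μ, (κ₁ ×ₖ κ₂) q
          (Prod.mk q ⁻¹' (Prod.snd ⁻¹' {p : X₁ × X₂ | f₁ p.1 = f₂ p.2})) = 1 := by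
        filter_upwards [hae₁, hae₂] with q h1 h2
        rw [Kernel.prod_apply]
        have hcompl : ((κ₁ q).prod (κ₂ q)) ({p : X₁ × X₂ | f₁ p.1 = f₂ p.2})ᶜ = 0 := by
          have hsub : ({p : X₁ × X₂ | f₁ p.1 = f₂ p.2})ᶜ ⊆
              ({x | ¬ q = f₁ x} ×ˢ univ) ∪ (univ ×ˢ {x | ¬ q = f₂ x}) := by
            rintro ⟨x, y⟩ hp
            simp only [mem_compl_iff, mem_setOf_eq] at hp
            by_cases hx : q = f₁ x
            · exact Or.inr ⟨trivial, fun hy => hp (hx ▸ hy ▸ rfl)⟩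
            · exact Or.inl ⟨hx, trivial⟩
          refine le_antisymm ?_ zero_le
          calc ((κ₁ q).prod (κ₂ q)) ({p : X₁ × X₂ | f₁ p.1 = f₂ p.2})ᶜ
              ≤ ((κ₁ q).prod (κ₂ q)) (({x | ¬ q = f₁ x} ×ˢ univ) ∪ (univ ×ˢ {x | ¬ q = f₂ x})) :=
                measure_mono hsub
            _ ≤ ((κ₁ q).prod (κ₂ q)) ({x | ¬ q = f₁ x} ×ˢ univ) +
                ((κ₁ q).prod (κ₂ q)) (univ ×ˢ {x | ¬ q = f₂ x}) := measure_union_le _ _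
            _ = 0 := by rw [Measure.prod_prod, Measure.prod_prod, h1, h2]; simp
        exact (prob_compl_eq_zero_iff hS).mp hcompl
      rw [lintegral_congr_ae hone]
      simp
    refine ⟨W, ⟨inferInstance, ?_, ?_⟩, hWS⟩
    · ext A hA
      have hΔ : Δ A = ρ₁ (Prod.snd ⁻¹' A) := by
        rw [hρ₁, Measure.map_apply hm₁ (measurable_snd hA)]
        rfl
      rw [Measure.map_apply measurable_fst hA, hW, Measure.snd_apply (measurable_fst hA),
        Measure.compProd_apply (measurable_snd (measurable_fst hA)), hΔ, ← hd₁,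
        Measure.compProd_apply (measurable_snd hA)]
      refine lintegral_congr fun q => ?_
      have hpre : Prod.mk q ⁻¹' (Prod.snd ⁻¹' (Prod.fst ⁻¹' A) : Set (Q × (X₁ × X₂)))
          = A ×ˢ (univ : Set X₂) := by ext p; simp
      rw [hpre, Kernel.prod_apply, Measure.prod_prod, measure_univ, mul_one]
      rfl
    · ext A hA
      have hΘ : Θ A = ρ₂ (Prod.snd ⁻¹' A) := by
        rw [hρ₂, Measure.map_apply hm₂ (measurable_snd hA)]
        rfl
      rw [Measure.map_apply measurable_snd hA, hW, Measure.snd_apply (measurable_snd hA),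
        Measure.compProd_apply (measurable_snd (measurable_snd hA)), hΘ, ← hd₂,
        Measure.compProd_apply (measurable_snd hA)]
      refine lintegral_congr fun q => ?_
      have hpre : Prod.mk q ⁻¹' (Prod.snd ⁻¹' (Prod.snd ⁻¹' A) : Set (Q × (X₁ × X₂)))
          = (univ : Set X₁) ×ˢ A := by ext p; simp
      rw [hpre, Kernel.prod_apply, Measure.prod_prod, measure_univ, one_mul]
      rfl
  · rintro ⟨W, ⟨hWp, hfst, hsnd⟩, hWS⟩ B hB
    have hnull : W {p : X₁ × X₂ | f₁ p.1 = f₂ p.2}ᶜ = 0 := by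
      rw [prob_compl_eq_zero_iff hS]; exact hWS
    have haeq : ∀ᵐ p ∂W, f₁ p.1 = f₂ p.2 := by rw [ae_iff]; exact hnull
    have hae : {p : X₁ × X₂ | f₁ p.1 ∈ B} =ᵐ[W] {p : X₁ × X₂ | f₂ p.2 ∈ B} := by
      rw [Filter.eventuallyEq_set]
      filter_upwards [haeq] with p hp
      simp [mem_setOf_eq, hp]
    rw [← hfst, ← hsnd, Measure.map_apply measurable_fst (hf₁ hB),
      Measure.map_apply measurable_snd (hf₂ hB)]
    exact measure_congr hae
end

section
/- For any two Borel probability measures ν and ν̃ on a nonempty standard Borel space Z there exists a coupling W of ν and ν̃ such that W({(z,z') ∈ Z × Z | z = z'}) ≥ (ν ⊓ ν̃)(Z), where ν ⊓ ν̃ denotes the infimum of ν and ν̃ in the lattice of measures on Z. -/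
open MeasureTheory

/-- Maximal (γ-)coupling: any two Borel probability measures on a nonempty standard
Borel space admit a coupling placing at least the common mass `(ν ⊓ ν̃)(Z)` on the
diagonal. -/
theorem exists_maximal_coupling
    {Z : Type*} [MeasurableSpace Z] [StandardBorelSpace Z] [Nonempty Z]
    (ν ν' : Measure Z) [IsProbabilityMeasure ν] [IsProbabilityMeasure ν'] :
    ∃ W : Measure (Z × Z), IsCoupling W ν ν' ∧
      (ν ⊓ ν') Set.univ ≤ W {p : Z × Z | p.1 = p.2} := by
  -- the diagonal is measurable
  letI := upgradeStandardBorel Z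
  have hdiag : MeasurableSet {p : Z × Z | p.1 = p.2} :=
    (isClosed_diagonal (X := Z)).measurableSet
  set ρ : Measure Z := ν ⊓ ν' with hρdef
  have hρν : ρ ≤ ν := inf_le_left
  have hρν' : ρ ≤ ν' := inf_le_right
  haveI : IsFiniteMeasure ρ := isFiniteMeasure_of_le ν hρν
  haveI : IsFiniteMeasure (ν - ρ) := isFiniteMeasure_of_le ν Measure.sub_le
  haveI : IsFiniteMeasure (ν' - ρ) := isFiniteMeasure_of_le ν' Measure.sub_le
  set c : ENNReal := ρ Set.univ with hc
  have hc1 : c ≤ 1 := by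
    calc c ≤ ν Set.univ := hρν _
    _ = 1 := measure_univ
  have hsub : (ν - ρ) Set.univ = 1 - c := by
    rw [Measure.sub_apply MeasurableSet.univ hρν, measure_univ]
  have hsub' : (ν' - ρ) Set.univ = 1 - c := by
    rw [Measure.sub_apply MeasurableSet.univ hρν', measure_univ]
  have hd : Measurable (fun z : Z => (z, z)) := measurable_id.prodMk measurable_id
  set W : Measure (Z × Z) :=
    (ρ.map fun z => (z, z)) + (1 - c)⁻¹ • ((ν - ρ).prod (ν' - ρ)) with hW
  -- key scalar identities
  have hkeygen : ∀ μ : Measure Z, μ Set.univ = 1 - c →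
      ((1 - c)⁻¹ * (1 - c)) • μ = μ := by
    intro μ hμ
    rcases eq_or_lt_of_le hc1 with h | h
    · have h0 : (1 : ENNReal) - c = 0 := by simp [← h]
      have : μ = 0 := Measure.measure_univ_eq_zero.mp (by rw [hμ, h0])
      rw [this]; simp
    · have h0 : (1 : ENNReal) - c ≠ 0 := by
        simpa using (tsub_pos_of_lt h).ne'
      rw [ENNReal.inv_mul_cancel h0 (by simp), one_smul]
  have hfst : W.map Prod.fst = ν := by
    rw [hW, Measure.map_add _ _ measurable_fst, Measure.map_smul,
      Measure.map_map measurable_fst hd, Measure.map_fst_prod]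
    have h1 : (Prod.fst ∘ fun z : Z => (z, z)) = id := rfl
    rw [h1, Measure.map_id, hsub', smul_smul, hkeygen _ hsub, add_comm]
    exact Measure.sub_add_cancel_of_le hρν
  have hsnd : W.map Prod.snd = ν' := by
    rw [hW, Measure.map_add _ _ measurable_snd, Measure.map_smul,
      Measure.map_map measurable_snd hd, Measure.map_snd_prod]
    have h1 : (Prod.snd ∘ fun z : Z => (z, z)) = id := rfl
    rw [h1, Measure.map_id, hsub, smul_smul, hkeygen _ hsub', add_comm]
    exact Measure.sub_add_cancel_of_le hρν'
  have hprob : IsProbabilityMeasure W := by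
    constructor
    have := congrArg (fun m : Measure Z => m Set.univ) hfst
    rw [Measure.map_apply measurable_fst MeasurableSet.univ] at this
    simpa using this
  refine ⟨W, ⟨hprob, hfst, hsnd⟩, ?_⟩
  have hle : (ρ.map fun z => (z, z)) {p : Z × Z | p.1 = p.2} ≤
      W {p : Z × Z | p.1 = p.2} := by
    rw [hW]; exact le_add_right le_rfl |>.trans_eq rfl
  refine le_trans ?_ hle
  rw [Measure.map_apply hd hdiag]
  simp
  exact hc.le
end

section
/- Let X₁, X₂, Q be nonempty standard Borel spaces, f₁ : X₁ → Q and f₂ : X₂ → Q measurable maps, Δ, Θ Borel probability measures on X₁, X₂, and let ρ be a probability measure on Q × Q whose first marginal is the pushforward of Δ under f₁ and whose second marginal is the pushforward of Θ under f₂. Then there exists a coupling W of Δ and Θ such that W({(x₁,x₂) | f₁(x₁) = f₂(x₂)}) ≥ ρ({(q,q') ∈ Q × Q | q = q'}). -/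
open MeasureTheory

open ProbabilityTheory Set

/-- Fiber property of the conditional kernel of `Δ.map (fun x => (f x, x))`. -/
lemma condKernel_fiber_ae {X Q : Type*}
    [MeasurableSpace X] [StandardBorelSpace X] [Nonempty X]
    [MeasurableSpace Q]
    [MeasurableSingletonClass Q]
    (f : X → Q) (hf : Measurable f)
    (hdiag : MeasurableSet {q : Q × Q | q.1 = q.2})
    (Δ : Measure X) [IsProbabilityMeasure Δ] :
    ∀ᵐ q ∂(Δ.map f), (Δ.map (fun x => (f x, x))).condKernel q (f ⁻¹' {q}) = 1 := by
  have hm : Measurable fun x : X => (f x, x) := hf.prodMk measurable_id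
  set μ : Measure (Q × X) := Δ.map (fun x => (f x, x)) with hμ
  haveI : IsProbabilityMeasure μ := Measure.isProbabilityMeasure_map hm.aemeasurable
  have hgraph : MeasurableSet {p : Q × X | f p.2 = p.1} :=
    ((hf.comp measurable_snd).prodMk measurable_fst) hdiag
  have hfst : μ.fst = Δ.map f := by
    rw [Measure.fst, hμ, Measure.map_map measurable_fst hm]; rfl
  have hnull : μ {p : Q × X | f p.2 = p.1}ᶜ = 0 := by
    rw [hμ, Measure.map_apply hm hgraph.compl]
    convert measure_empty (μ := Δ)
    ext x; simp
  have hcomp : μ.fst ⊗ₘ μ.condKernel = μ := μ.disintegrate μ.condKernel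
  rw [← hcomp, Measure.compProd_apply hgraph.compl] at hnull
  have hmeas : Measurable fun q => μ.condKernel q (Prod.mk q ⁻¹' {p : Q × X | f p.2 = p.1}ᶜ) :=
    Kernel.measurable_kernel_prodMk_left hgraph.compl
  rw [lintegral_eq_zero_iff hmeas] at hnull
  rw [← hfst]
  filter_upwards [hnull] with q hq
  have hpre : Prod.mk q ⁻¹' {p : Q × X | f p.2 = p.1}ᶜ = (f ⁻¹' {q})ᶜ := by
    ext x; simp [eq_comm]
  rw [hpre] at hq
  haveI : IsProbabilityMeasure (μ.condKernel q) := IsMarkovKernel.isProbabilityMeasure q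
  have := prob_compl_eq_zero_iff (μ := μ.condKernel q) (hf (measurableSet_singleton q))
  exact this.mp hq

/-- Lifting a coupling on the quotient space: given a coupling `ρ` of the pushforwards
of `Δ` and `Θ` under `f₁` and `f₂`, there is a coupling `W` of `Δ` and `Θ` placing at
least as much mass on `{(x₁, x₂) | f₁ x₁ = f₂ x₂}` as `ρ` places on the diagonal. -/
theorem exists_coupling_of_quotient_coupling
    {X₁ X₂ Q : Type*}
    [MeasurableSpace X₁] [StandardBorelSpace X₁] [Nonempty X₁]
    [MeasurableSpace X₂] [StandardBorelSpace X₂] [Nonempty X₂]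
    [MeasurableSpace Q] [StandardBorelSpace Q] [Nonempty Q]
    (f₁ : X₁ → Q) (f₂ : X₂ → Q)
    (hf₁ : Measurable f₁) (hf₂ : Measurable f₂)
    (Δ : Measure X₁) (Θ : Measure X₂)
    [IsProbabilityMeasure Δ] [IsProbabilityMeasure Θ]
    (ρ : Measure (Q × Q)) [IsProbabilityMeasure ρ]
    (hρ₁ : ρ.map Prod.fst = Δ.map f₁) (hρ₂ : ρ.map Prod.snd = Θ.map f₂) :
    ∃ W : Measure (X₁ × X₂), IsCoupling W Δ Θ ∧
      ρ {q : Q × Q | q.1 = q.2} ≤ W {p : X₁ × X₂ | f₁ p.1 = f₂ p.2} := by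
  letI := upgradeStandardBorel Q
  have hdiag : MeasurableSet {q : Q × Q | q.1 = q.2} :=
    (isClosed_eq continuous_fst continuous_snd).measurableSet
  have hm₁ : Measurable fun x : X₁ => (f₁ x, x) := hf₁.prodMk measurable_id
  have hm₂ : Measurable fun x : X₂ => (f₂ x, x) := hf₂.prodMk measurable_id
  set μ₁ : Measure (Q × X₁) := Δ.map (fun x => (f₁ x, x)) with hμ₁
  set μ₂ : Measure (Q × X₂) := Θ.map (fun x => (f₂ x, x)) with hμ₂
  haveI : IsProbabilityMeasure μ₁ := Measure.isProbabilityMeasure_map hm₁.aemeasurable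
  haveI : IsProbabilityMeasure μ₂ := Measure.isProbabilityMeasure_map hm₂.aemeasurable
  set κ₁ := μ₁.condKernel with hκ₁
  set κ₂ := μ₂.condKernel with hκ₂
  have hfst₁ : μ₁.fst = Δ.map f₁ := by
    rw [Measure.fst, hμ₁, Measure.map_map measurable_fst hm₁]; rfl
  have hfst₂ : μ₂.fst = Θ.map f₂ := by
    rw [Measure.fst, hμ₂, Measure.map_map measurable_fst hm₂]; rfl
  set K : Kernel (Q × Q) (X₁ × X₂) :=
    (κ₁.comap Prod.fst measurable_fst) ×ₖ (κ₂.comap Prod.snd measurable_snd) with hK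
  haveI : IsMarkovKernel K := by
    rw [hK]; infer_instance
  have hKap : ∀ p : Q × Q, K p = (κ₁ p.1).prod (κ₂ p.2) := fun p => by
    rw [hK, Kernel.prod_apply, Kernel.comap_apply, Kernel.comap_apply]
  set W : Measure (X₁ × X₂) := ρ.bind K with hW
  have hWap : ∀ s : Set (X₁ × X₂), MeasurableSet s →
      W s = ∫⁻ p, (κ₁ p.1).prod (κ₂ p.2) s ∂ρ := by
    intro s hs
    rw [hW, Measure.bind_apply hs K.measurable.aemeasurable]
    exact lintegral_congr fun p => by rw [hKap]
  haveI hWprob : IsProbabilityMeasure W := by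
    constructor
    rw [hWap _ MeasurableSet.univ]
    simp only [measure_univ]
    simp
  refine ⟨W, ⟨hWprob, ?_, ?_⟩, ?_⟩
  · -- first marginal
    ext s hs
    rw [Measure.map_apply measurable_fst hs, hWap _ (measurable_fst hs)]
    have h1 : ∀ p : Q × Q, (κ₁ p.1).prod (κ₂ p.2) (Prod.fst ⁻¹' s) = κ₁ p.1 s := by
      intro p
      rw [← Set.prod_univ, Measure.prod_prod, measure_univ, mul_one]
    simp_rw [h1]
    have h2 : ∫⁻ p : Q × Q, κ₁ p.1 s ∂ρ = ∫⁻ q, κ₁ q s ∂(ρ.map Prod.fst) :=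
      (lintegral_map (κ₁.measurable_coe hs) measurable_fst).symm
    rw [h2, hρ₁, ← hfst₁]
    have h3 : ∫⁻ q, κ₁ q s ∂μ₁.fst = (μ₁.fst ⊗ₘ κ₁) (Set.univ ×ˢ s) := by
      rw [Measure.compProd_apply (MeasurableSet.univ.prod hs)]
      exact lintegral_congr fun q => by simp
    rw [h3, μ₁.disintegrate μ₁.condKernel, hμ₁,
      Measure.map_apply hm₁ (MeasurableSet.univ.prod hs)]
    congr 1
    ext x; simp
  · -- second marginal
    ext s hs
    rw [Measure.map_apply measurable_snd hs, hWap _ (measurable_snd hs)]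
    have h1 : ∀ p : Q × Q, (κ₁ p.1).prod (κ₂ p.2) (Prod.snd ⁻¹' s) = κ₂ p.2 s := by
      intro p
      rw [← Set.univ_prod, Measure.prod_prod, measure_univ, one_mul]
    simp_rw [h1]
    have h2 : ∫⁻ p : Q × Q, κ₂ p.2 s ∂ρ = ∫⁻ q, κ₂ q s ∂(ρ.map Prod.snd) :=
      (lintegral_map (κ₂.measurable_coe hs) measurable_snd).symm
    rw [h2, hρ₂, ← hfst₂]
    have h3 : ∫⁻ q, κ₂ q s ∂μ₂.fst = (μ₂.fst ⊗ₘ κ₂) (Set.univ ×ˢ s) := by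
      rw [Measure.compProd_apply (MeasurableSet.univ.prod hs)]
      exact lintegral_congr fun q => by simp
    rw [h3, μ₂.disintegrate μ₂.condKernel, hμ₂,
      Measure.map_apply hm₂ (MeasurableSet.univ.prod hs)]
    congr 1
    ext x; simp
  · -- mass bound
    have hfib₁ := condKernel_fiber_ae f₁ hf₁ hdiag Δ
    have hfib₂ := condKernel_fiber_ae f₂ hf₂ hdiag Θ
    rw [← hρ₁] at hfib₁
    rw [← hρ₂] at hfib₂
    have hgraph₁ : MeasurableSet {p : Q × X₁ | f₁ p.2 = p.1} :=
      ((hf₁.comp measurable_snd).prodMk measurable_fst) hdiag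
    have hgraph₂ : MeasurableSet {p : Q × X₂ | f₂ p.2 = p.1} :=
      ((hf₂.comp measurable_snd).prodMk measurable_fst) hdiag
    have hms₁ : MeasurableSet {q : Q | κ₁ q (f₁ ⁻¹' {q}) = 1} := by
      have : Measurable fun q => κ₁ q (Prod.mk q ⁻¹' {p : Q × X₁ | f₁ p.2 = p.1}) :=
        Kernel.measurable_kernel_prodMk_left hgraph₁
      have heq : (fun q => κ₁ q (f₁ ⁻¹' {q}))
          = fun q => κ₁ q (Prod.mk q ⁻¹' {p : Q × X₁ | f₁ p.2 = p.1}) := rfl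
      exact (heq ▸ this) (measurableSet_singleton 1)
    have hms₂ : MeasurableSet {q : Q | κ₂ q (f₂ ⁻¹' {q}) = 1} := by
      have : Measurable fun q => κ₂ q (Prod.mk q ⁻¹' {p : Q × X₂ | f₂ p.2 = p.1}) :=
        Kernel.measurable_kernel_prodMk_left hgraph₂
      have heq : (fun q => κ₂ q (f₂ ⁻¹' {q}))
          = fun q => κ₂ q (Prod.mk q ⁻¹' {p : Q × X₂ | f₂ p.2 = p.1}) := rfl
      exact (heq ▸ this) (measurableSet_singleton 1)
    have h₁ : ∀ᵐ p ∂ρ, κ₁ p.1 (f₁ ⁻¹' {p.1}) = 1 :=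
      (ae_map_iff measurable_fst.aemeasurable hms₁).mp hfib₁
    have h₂ : ∀ᵐ p ∂ρ, κ₂ p.2 (f₂ ⁻¹' {p.2}) = 1 :=
      (ae_map_iff measurable_snd.aemeasurable hms₂).mp hfib₂
    have hS : MeasurableSet {p : X₁ × X₂ | f₁ p.1 = f₂ p.2} :=
      ((hf₁.comp measurable_fst).prodMk (hf₂.comp measurable_snd)) hdiag
    calc ρ {q : Q × Q | q.1 = q.2}
        = ∫⁻ p, ({q : Q × Q | q.1 = q.2}).indicator (fun _ => 1) p ∂ρ := by
          rw [lintegral_indicator hdiag]; simp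
      _ ≤ ∫⁻ p, (κ₁ p.1).prod (κ₂ p.2) {p : X₁ × X₂ | f₁ p.1 = f₂ p.2} ∂ρ := by
          refine lintegral_mono_ae ?_
          filter_upwards [h₁, h₂] with p hp1 hp2
          by_cases hpd : p ∈ {q : Q × Q | q.1 = q.2}
          · rw [Set.indicator_of_mem hpd]
            have hsub : (f₁ ⁻¹' {p.1}) ×ˢ (f₂ ⁻¹' {p.2})
                ⊆ {p' : X₁ × X₂ | f₁ p'.1 = f₂ p'.2} := by
              rintro ⟨x, y⟩ ⟨hx, hy⟩
              simp only [Set.mem_preimage, Set.mem_singleton_iff] at hx hy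
              simp only [Set.mem_setOf_eq] at hpd ⊢
              rw [hx, hy, hpd]
            have hmono := measure_mono (μ := (κ₁ p.1).prod (κ₂ p.2)) hsub
            rw [Measure.prod_prod, hp1, hp2, one_mul] at hmono
            exact hmono
          · rw [Set.indicator_of_notMem hpd]; exact zero_le
      _ = W {p : X₁ × X₂ | f₁ p.1 = f₂ p.2} := (hWap _ hS).symm
end

section
/- Let X₁, X₂ be measurable spaces and (Y,d) a metric space with its Borel σ-algebra, let ε ≥ 0 and δ ∈ [0,1]. Let W be a probability measure on X₁ × X₂ with first marginal Δ and second marginal Θ, let R ⊆ X₁ × X₂ be a measurable set with W(R) ≥ 1 − δ, and let h₁ : X₁ → Y, h₂ : X₂ → Y be Borel measurable with d(h₁(x₁), h₂(x₂)) ≤ ε for all (x₁,x₂) ∈ R. Then for every Borel set A ⊆ Y: Δ(h₁⁻¹(A_{−ε})) ≤ Θ(h₂⁻¹(A)) + δ and Θ(h₂⁻¹(A)) ≤ Δ(h₁⁻¹(A_ε)) + δ, where A_ε denotes the closed ε-thickening of A (the set of points at infimal distance at most ε from A, Metric.cthickening ε A) and A_{−ε} denotes the ε-contraction of A, i.e.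 the complement of the closed ε-thickening of Aᶜ. -/
open MeasureTheory

/-- One-step probability bounds for ε,δ-approximate simulations: if a coupling puts
mass at least `1 - δ` on a relation along which outputs are within distance `ε`, then
for every Borel set `A` of outputs, the measure of the `ε`-contraction `A₋ε` under `h₁`
is at most the measure of `A` under `h₂` plus `δ`, and the measure of `A` under `h₂` is
at most the measure of the `ε`-expansion `Aε` under `h₁` plus `δ`. -/
theorem output_event_bounds
    {X₁ X₂ Y : Type*} [MeasurableSpace X₁] [MeasurableSpace X₂]
    [MetricSpace Y] [MeasurableSpace Y] [BorelSpace Y]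
    (ε δ : ℝ) (hε : 0 ≤ ε) (hδ0 : 0 ≤ δ) (hδ1 : δ ≤ 1)
    (W : Measure (X₁ × X₂)) [IsProbabilityMeasure W]
    (Δ : Measure X₁) (Θ : Measure X₂)
    (hΔ : W.map Prod.fst = Δ) (hΘ : W.map Prod.snd = Θ)
    (R : Set (X₁ × X₂)) (hR : MeasurableSet R)
    (hWR : 1 - ENNReal.ofReal δ ≤ W R)
    (h₁ : X₁ → Y) (h₂ : X₂ → Y) (mh₁ : Measurable h₁) (mh₂ : Measurable h₂)
    (hd : ∀ p ∈ R, dist (h₁ p.1) (h₂ p.2) ≤ ε) :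
    ∀ A : Set Y, MeasurableSet A →
      Δ (h₁ ⁻¹' (Metric.cthickening ε Aᶜ)ᶜ) ≤ Θ (h₂ ⁻¹' A) + ENNReal.ofReal δ ∧
      Θ (h₂ ⁻¹' A) ≤ Δ (h₁ ⁻¹' Metric.cthickening ε A) + ENNReal.ofReal δ := by
  intro A hA
  have hRc : W Rᶜ ≤ ENNReal.ofReal δ := by
    have h1 : W Rᶜ = 1 - W R := by
      rw [measure_compl hR (measure_ne_top W R), measure_univ]
    rw [h1]
    calc 1 - W R ≤ 1 - (1 - ENNReal.ofReal δ) := tsub_le_tsub_left hWR 1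
      _ = ENNReal.ofReal δ :=
        ENNReal.sub_sub_cancel ENNReal.one_ne_top (ENNReal.ofReal_le_one.mpr hδ1)
  have key : ∀ S T : Set (X₁ × X₂), S ∩ R ⊆ T → W S ≤ W T + ENNReal.ofReal δ := by
    intro S T hST
    calc W S ≤ W (T ∪ Rᶜ) := measure_mono (fun p hp => by
          by_cases h : p ∈ R
          · exact Or.inl (hST ⟨hp, h⟩)
          · exact Or.inr h)
      _ ≤ W T + W Rᶜ := measure_union_le _ _
      _ ≤ W T + ENNReal.ofReal δ := add_le_add_right hRc _
  subst hΔ hΘ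
  have mcth : MeasurableSet (Metric.cthickening ε Aᶜ)ᶜ :=
    (Metric.isClosed_cthickening.measurableSet).compl
  have mcth2 : MeasurableSet (Metric.cthickening ε A) :=
    Metric.isClosed_cthickening.measurableSet
  rw [Measure.map_apply measurable_fst (mh₁ mcth),
      Measure.map_apply measurable_snd (mh₂ hA),
      Measure.map_apply measurable_fst (mh₁ mcth2)]
  constructor
  · apply key
    rintro ⟨x₁, x₂⟩ ⟨hx, hxR⟩
    by_contra hA2
    exact hx (Metric.mem_cthickening_of_dist_le _ _ _ _ hA2 (hd _ hxR))
  · apply key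
    rintro ⟨x₁, x₂⟩ ⟨hx, hxR⟩
    exact Metric.mem_cthickening_of_dist_le _ _ _ _ hx
      ((dist_comm (h₁ x₁) (h₂ x₂) ▸ hd _ hxR))
end

section
/- Let E be a separable normed vector space with its Borel σ-algebra, U a type, Ω a measurable space carrying a probability measure P, and let g₁, g₂ : Ω → E be measurable maps with P({ω | ‖g₁(ω) − g₂(ω)‖ ≤ c}) = 1 for some c ≥ 0. Let f : E × U → E satisfy ‖f(a,u) − f(b,u)‖ ≤ L·‖a − b‖ for all a, b ∈ E, u ∈ U, where 0 ≤ L < 1. Fix u ∈ U and x₁, x₂ ∈ E with ‖x₁ − x₂‖ ≤ c/(1−L), and define W as the pushforward of P under ω ↦ (f(x₁,u) + g₁(ω), f(x₂,u) + g₂(ω)). Then W is a coupling of the pushforward of P under ω ↦ f(x₁,u) + g₁(ω) and the pushforward of P under ω ↦ f(x₂,u) + g₂(ω), and W({(a,b) ∈ E × E | ‖a − b‖ ≤ c/(1−L)}) = 1. -/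
open MeasureTheory

/-- Shared-noise lifting: for two contractive dynamics driven by (almost surely)
`c`-close realisations of a shared noise source, the joint pushforward couples the two
transition kernels and keeps the pair inside the relation
`{(a, b) | ‖a - b‖ ≤ c / (1 - L)}` with probability one. -/
theorem shared_noise_coupling
    {E U Ω : Type*} [NormedAddCommGroup E] [NormedSpace ℝ E]
    [MeasurableSpace E] [BorelSpace E] [TopologicalSpace.SeparableSpace E]
    [MeasurableSpace Ω]
    (P : Measure Ω) [IsProbabilityMeasure P]
    (g₁ g₂ : Ω → E) (hg₁ : Measurable g₁) (hg₂ : Measurable g₂)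
    (c : ℝ) (hc : 0 ≤ c)
    (hP : P {ω : Ω | ‖g₁ ω - g₂ ω‖ ≤ c} = 1)
    (L : ℝ) (hL0 : 0 ≤ L) (hL1 : L < 1)
    (f : E × U → E) (hf : ∀ (a b : E) (u : U), ‖f (a, u) - f (b, u)‖ ≤ L * ‖a - b‖)
    (u : U) (x₁ x₂ : E) (hx : ‖x₁ - x₂‖ ≤ c / (1 - L)) :
    IsCoupling (P.map (fun ω => (f (x₁, u) + g₁ ω, f (x₂, u) + g₂ ω)))
      (P.map (fun ω => f (x₁, u) + g₁ ω)) (P.map (fun ω => f (x₂, u) + g₂ ω)) ∧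
    P.map (fun ω => (f (x₁, u) + g₁ ω, f (x₂, u) + g₂ ω))
        {p : E × E | ‖p.1 - p.2‖ ≤ c / (1 - L)} = 1 := by

  haveI : SecondCountableTopology E :=
    UniformSpace.secondCountable_of_separable E
  have hm1 : Measurable (fun ω => f (x₁, u) + g₁ ω) := measurable_const.add hg₁
  have hm2 : Measurable (fun ω => f (x₂, u) + g₂ ω) := measurable_const.add hg₂
  have hm : Measurable (fun ω => (f (x₁, u) + g₁ ω, f (x₂, u) + g₂ ω)) := hm1.prodMk hm2
  have hset : MeasurableSet {p : E × E | ‖p.1 - p.2‖ ≤ c / (1 - L)} := by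
    have : Continuous (fun p : E × E => ‖p.1 - p.2‖) :=
      (continuous_fst.sub continuous_snd).norm
    exact measurableSet_le this.measurable measurable_const
  refine ⟨⟨Measure.isProbabilityMeasure_map hm.aemeasurable, ?_, ?_⟩, ?_⟩
  · rw [Measure.map_map measurable_fst hm]; rfl
  · rw [Measure.map_map measurable_snd hm]; rfl
  · rw [Measure.map_apply hm hset]
    have hsub : {ω : Ω | ‖g₁ ω - g₂ ω‖ ≤ c} ⊆
        (fun ω => (f (x₁, u) + g₁ ω, f (x₂, u) + g₂ ω)) ⁻¹'
          {p : E × E | ‖p.1 - p.2‖ ≤ c / (1 - L)} := by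
      intro ω hω
      simp only [Set.mem_setOf_eq, Set.mem_preimage] at *
      have h1 : (f (x₁, u) + g₁ ω) - (f (x₂, u) + g₂ ω)
          = (f (x₁, u) - f (x₂, u)) + (g₁ ω - g₂ ω) := by abel
      rw [h1]
      have h2 : ‖f (x₁, u) - f (x₂, u)‖ ≤ L * ‖x₁ - x₂‖ := hf x₁ x₂ u
      have hL : 0 < 1 - L := by linarith
      calc ‖(f (x₁, u) - f (x₂, u)) + (g₁ ω - g₂ ω)‖
          ≤ ‖f (x₁, u) - f (x₂, u)‖ + ‖g₁ ω - g₂ ω‖ := norm_add_le _ _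
        _ ≤ L * (c / (1 - L)) + c := by
            have := mul_le_mul_of_nonneg_left hx hL0
            linarith
        _ = c / (1 - L) := by field_simp; ring
    refine le_antisymm prob_le_one ?_
    calc (1 : ENNReal) = P {ω : Ω | ‖g₁ ω - g₂ ω‖ ≤ c} := hP.symm
      _ ≤ _ := measure_mono hsub
end

section
/- Let E be a separable normed vector space with its Borel σ-algebra, U a type, p a Borel probability measure on E with p({e | ‖e‖ ≤ c}) = 1 for some c ≥ 0, and let f : E × U → E satisfy ‖f(a,u) − f(b,u)‖ ≤ L·‖a − b‖ for all a, b ∈ E, u ∈ U, where 0 ≤ L < 1. Fix u ∈ U and x₁, x₂ ∈ E with ‖x₁ − x₂‖ ≤ c/(1−L), and define W as the pushforward of p under e ↦ (f(x₁,u) + e, f(x₂,u)). Then W is a coupling of the pushforward of p under e ↦ f(x₁,u) + e and the Dirac measure at f(x₂,u), and W({(a,b) ∈ E × E | ‖a − b‖ ≤ c/(1−L)}) = 1. -/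
open MeasureTheory

/-- Lifting for a noisy model and its noiseless counterpart: if the noise is bounded in
norm by `c` almost surely and the dynamics are `L`-contractive (`L < 1`), then the joint
pushforward couples the noisy transition kernel at `x₁` with the Dirac measure at
`f (x₂, u)` and keeps the pair in `{(a, b) | ‖a - b‖ ≤ c / (1 - L)}` with probability
one. -/
theorem noiseless_coupling
    {E U : Type*} [NormedAddCommGroup E] [NormedSpace ℝ E]
    [MeasurableSpace E] [BorelSpace E] [TopologicalSpace.SeparableSpace E]
    (p : Measure E) [IsProbabilityMeasure p]
    (c : ℝ) (hc : 0 ≤ c) (hp : p {e : E | ‖e‖ ≤ c} = 1)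
    (L : ℝ) (hL0 : 0 ≤ L) (hL1 : L < 1)
    (f : E × U → E) (hf : ∀ (a b : E) (u : U), ‖f (a, u) - f (b, u)‖ ≤ L * ‖a - b‖)
    (u : U) (x₁ x₂ : E) (hx : ‖x₁ - x₂‖ ≤ c / (1 - L)) :
    IsCoupling (p.map (fun e => (f (x₁, u) + e, f (x₂, u))))
      (p.map (fun e => f (x₁, u) + e)) (Measure.dirac (f (x₂, u))) ∧
    p.map (fun e => (f (x₁, u) + e, f (x₂, u)))
        {q : E × E | ‖q.1 - q.2‖ ≤ c / (1 - L)} = 1 := by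
  have h1L : (0:ℝ) < 1 - L := by linarith
  haveI : SecondCountableTopology E := UniformSpace.secondCountable_of_separable E
  have hmeas1 : Measurable (fun e : E => f (x₁, u) + e) := measurable_const.add measurable_id
  have hmeas : Measurable (fun e : E => (f (x₁, u) + e, f (x₂, u))) :=
    hmeas1.prodMk measurable_const
  constructor
  · refine ⟨?_, ?_, ?_⟩
    · exact Measure.isProbabilityMeasure_map hmeas.aemeasurable
    · rw [Measure.map_map measurable_fst hmeas]
      rfl
    · rw [Measure.map_map measurable_snd hmeas]
      simp [Function.comp_def, Measure.map_const]
  · have hS : MeasurableSet {q : E × E | ‖q.1 - q.2‖ ≤ c / (1 - L)} := by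
      have : Continuous fun q : E × E => ‖q.1 - q.2‖ :=
        (continuous_fst.sub continuous_snd).norm
      exact measurableSet_le this.measurable measurable_const
    rw [Measure.map_apply hmeas hS]
    have hsub : {e : E | ‖e‖ ≤ c} ⊆
        (fun e : E => (f (x₁, u) + e, f (x₂, u))) ⁻¹' {q : E × E | ‖q.1 - q.2‖ ≤ c / (1 - L)} := by
      intro e he
      simp only [Set.mem_setOf_eq, Set.mem_preimage] at *
      have h1 : ‖f (x₁, u) - f (x₂, u)‖ ≤ L * (c / (1 - L)) :=
        le_trans (hf x₁ x₂ u) (by nlinarith)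
      have heq : f (x₁, u) + e - f (x₂, u) = (f (x₁, u) - f (x₂, u)) + e := by abel
      have : ‖f (x₁, u) + e - f (x₂, u)‖ ≤ ‖f (x₁, u) - f (x₂, u)‖ + ‖e‖ := by
        rw [heq]; exact norm_add_le _ _
      have key : L * (c / (1 - L)) + c = c / (1 - L) := by field_simp; ring
      linarith
    have := measure_mono (μ := p) hsub
    have hle : p ((fun e : E => (f (x₁, u) + e, f (x₂, u))) ⁻¹'
        {q : E × E | ‖q.1 - q.2‖ ≤ c / (1 - L)}) ≤ 1 := prob_le_one
    exact le_antisymm hle (hp ▸ this)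
end

section
/- For all a = (a₁,a₂) and b = (b₁,b₂) in ℝ², the integral over ℝ² of (1/(2π))·|exp(−((v₁−a₁)² + (v₂−a₂)²)/2) − exp(−((v₁−b₁)² + (v₂−b₂)²)/2)| with respect to two-dimensional Lebesgue measure is at most (2/√(2π))·(|a₁ − b₁| + |a₂ − b₂|). -/
open MeasureTheory Real Set

private noncomputable def g1 (t : ℝ) : ℝ := Real.exp (-(t ^ 2 / 2))

private lemma g1_int : Integrable g1 := by
  have := integrable_exp_neg_mul_sq (by norm_num : (0:ℝ) < 1/2)
  refine this.congr ?_
  filter_upwards with x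
  simp [g1]; ring_nf

private lemma g1_total : ∫ x : ℝ, g1 x = Real.sqrt (2 * Real.pi) := by
  have := integral_gaussian (1/2)
  have h : ∀ x : ℝ, Real.exp (-(1/2 : ℝ) * x ^ 2) = g1 x := by
    intro x; simp [g1]; ring_nf
  simp_rw [h] at this
  rw [this, show Real.pi / (1/2 : ℝ) = 2 * Real.pi by ring]

private lemma g1_shift_int (a : ℝ) : Integrable (fun x : ℝ => g1 (x - a)) :=
  g1_int.comp_sub_right a

private lemma g1_shift_total (a : ℝ) :
    ∫ x : ℝ, g1 (x - a) = Real.sqrt (2 * Real.pi) := by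
  rw [integral_sub_right_eq_self g1 a]; exact g1_total

private lemma g1_nonneg (t : ℝ) : 0 ≤ g1 t := (Real.exp_pos _).le

private lemma g1_le_one (t : ℝ) : g1 t ≤ 1 := by
  apply Real.exp_le_one_iff.mpr
  nlinarith [sq_nonneg t]

/-- set integral translation on Iic -/
private lemma Iic_shift (c a : ℝ) :
    ∫ x in Iic c, g1 (x - a) = ∫ x in Iic (c - a), g1 x := by
  rw [← integral_indicator measurableSet_Iic, ← integral_indicator measurableSet_Iic]
  have h : ∀ x : ℝ, (Iic c).indicator (fun x => g1 (x - a)) x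
      = (Iic (c - a)).indicator g1 (x - a) := by
    intro x
    simp [Set.indicator_apply, Set.mem_Iic, sub_le_sub_iff_right]
  simp_rw [h]
  exact integral_sub_right_eq_self ((Iic (c - a)).indicator g1) a

private lemma oneD_le {a b : ℝ} (hab : a ≤ b) :
    ∫ x : ℝ, |g1 (x - a) - g1 (x - b)| ≤ 2 * (b - a) := by
  set c : ℝ := (a + b) / 2 with hc
  have Ia := g1_shift_int a
  have Ib := g1_shift_int b
  have Iab : Integrable (fun x : ℝ => |g1 (x - a) - g1 (x - b)|) := (Ia.sub Ib).abs
  -- split the integral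
  have hsplit := integral_add_compl (measurableSet_Iic (a := c)) Iab
  rw [← hsplit]
  have hle : ∀ x ∈ Iic c, g1 (x - b) ≤ g1 (x - a) := by
    intro x hx
    apply Real.exp_le_exp.mpr
    have : (x - a) ^ 2 ≤ (x - b) ^ 2 := by
      have : x ≤ c := hx
      nlinarith
    linarith
  have hge : ∀ x ∈ (Iic c)ᶜ, g1 (x - a) ≤ g1 (x - b) := by
    intro x hx
    apply Real.exp_le_exp.mpr
    have hx' : c < x := by simpa [compl_Iic] using hx
    have : (x - b) ^ 2 ≤ (x - a) ^ 2 := by nlinarith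
    linarith
  have h1 : ∫ x in Iic c, |g1 (x - a) - g1 (x - b)|
      = (∫ x in Iic c, g1 (x - a)) - ∫ x in Iic c, g1 (x - b) := by
    rw [← integral_sub (Ia.integrableOn) (Ib.integrableOn)]
    refine setIntegral_congr_fun measurableSet_Iic fun x hx => ?_
    exact abs_of_nonneg (by linarith [hle x hx])
  have h2 : ∫ x in (Iic c)ᶜ, |g1 (x - a) - g1 (x - b)|
      = (∫ x in (Iic c)ᶜ, g1 (x - b)) - ∫ x in (Iic c)ᶜ, g1 (x - a) := by
    rw [← integral_sub (Ib.integrableOn) (Ia.integrableOn)]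
    refine setIntegral_congr_fun (measurableSet_Iic).compl fun x hx => ?_
    rw [abs_sub_comm]
    exact abs_of_nonneg (by linarith [hge x hx])
  have hA := integral_add_compl (measurableSet_Iic (a := c)) Ia
  have hB := integral_add_compl (measurableSet_Iic (a := c)) Ib
  rw [g1_shift_total a] at hA
  rw [g1_shift_total b] at hB
  rw [h1, h2]
  have key : (∫ x in Iic c, g1 (x - a)) - ∫ x in Iic c, g1 (x - b)
      ≤ b - a := by
    rw [Iic_shift c a, Iic_shift c b,
      intervalIntegral.integral_Iic_sub_Iic (g1_int.integrableOn) (g1_int.integrableOn)]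
    calc ∫ t in (c - b)..(c - a), g1 t
        ≤ ∫ _t in (c - b)..(c - a), (1:ℝ) := by
          apply intervalIntegral.integral_mono_on (by linarith)
            g1_int.intervalIntegrable (intervalIntegrable_const)
          exact fun x _ => g1_le_one x
      _ = b - a := by simp
  linarith

private lemma oneD (a b : ℝ) :
    ∫ x : ℝ, |g1 (x - a) - g1 (x - b)| ≤ 2 * |a - b| := by
  rcases le_total a b with h | h
  · rw [abs_of_nonpos (by linarith), neg_sub]; exact oneD_le h
  · rw [abs_of_nonneg (by linarith)]
    calc ∫ x : ℝ, |g1 (x - a) - g1 (x - b)|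
        = ∫ x : ℝ, |g1 (x - b) - g1 (x - a)| := by
          congr 1; funext x; rw [abs_sub_comm]
      _ ≤ 2 * (a - b) := oneD_le h

/-- L¹-bound between bivariate standard Gaussian densities: the integral over `ℝ²` of the
absolute difference of the identity-covariance Gaussian densities with means `a` and `b`
is at most `(2 / √(2π)) (|a₁ - b₁| + |a₂ - b₂|)`. -/
theorem gaussian2d_density_L1_bound (a b : ℝ × ℝ) :
    ∫ v : ℝ × ℝ,
        (1 / (2 * Real.pi)) *
          |Real.exp (-(((v.1 - a.1) ^ 2 + (v.2 - a.2) ^ 2) / 2)) -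
            Real.exp (-(((v.1 - b.1) ^ 2 + (v.2 - b.2) ^ 2) / 2))|
      ≤ (2 / Real.sqrt (2 * Real.pi)) * (|a.1 - b.1| + |a.2 - b.2|) := by
  have hfac : ∀ (p q : ℝ), Real.exp (-((p ^ 2 + q ^ 2) / 2)) = g1 p * g1 q := by
    intro p q
    rw [g1, g1, ← Real.exp_add]
    ring_nf
  -- rewrite the integrand
  have hrw : ∀ v : ℝ × ℝ,
      (1 / (2 * Real.pi)) *
          |Real.exp (-(((v.1 - a.1) ^ 2 + (v.2 - a.2) ^ 2) / 2)) -
            Real.exp (-(((v.1 - b.1) ^ 2 + (v.2 - b.2) ^ 2) / 2))|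
      = (1 / (2 * Real.pi)) *
          |g1 (v.1 - a.1) * g1 (v.2 - a.2) - g1 (v.1 - b.1) * g1 (v.2 - b.2)| := by
    intro v; rw [hfac, hfac]
  simp_rw [hrw]
  -- integrability facts
  have Ipa : Integrable (fun v : ℝ × ℝ => g1 (v.1 - a.1) * g1 (v.2 - a.2)) := by
    have := Integrable.mul_prod (g1_shift_int a.1) (g1_shift_int a.2)
    simpa [Measure.volume_eq_prod] using this
  have Ipb : Integrable (fun v : ℝ × ℝ => g1 (v.1 - b.1) * g1 (v.2 - b.2)) := by
    have := Integrable.mul_prod (g1_shift_int b.1) (g1_shift_int b.2)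
    simpa [Measure.volume_eq_prod] using this
  have Iabs : Integrable
      (fun v : ℝ × ℝ => |g1 (v.1 - a.1) * g1 (v.2 - a.2) - g1 (v.1 - b.1) * g1 (v.2 - b.2)|) :=
    (Ipa.sub Ipb).abs
  have IG1 : Integrable
      (fun v : ℝ × ℝ => |g1 (v.1 - a.1) - g1 (v.1 - b.1)| * g1 (v.2 - a.2)) := by
    have := Integrable.mul_prod ((g1_shift_int a.1).sub (g1_shift_int b.1)).abs (g1_shift_int a.2)
    simpa [Measure.volume_eq_prod] using this
  have IG2 : Integrable
      (fun v : ℝ × ℝ => g1 (v.1 - b.1) * |g1 (v.2 - a.2) - g1 (v.2 - b.2)|) := by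
    have := Integrable.mul_prod (g1_shift_int b.1) ((g1_shift_int a.2).sub (g1_shift_int b.2)).abs
    simpa [Measure.volume_eq_prod] using this
  -- pointwise bound
  have hpt : ∀ v : ℝ × ℝ,
      |g1 (v.1 - a.1) * g1 (v.2 - a.2) - g1 (v.1 - b.1) * g1 (v.2 - b.2)|
        ≤ |g1 (v.1 - a.1) - g1 (v.1 - b.1)| * g1 (v.2 - a.2)
          + g1 (v.1 - b.1) * |g1 (v.2 - a.2) - g1 (v.2 - b.2)| := by
    intro v
    have h0 : g1 (v.1 - a.1) * g1 (v.2 - a.2) - g1 (v.1 - b.1) * g1 (v.2 - b.2)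
        = (g1 (v.1 - a.1) - g1 (v.1 - b.1)) * g1 (v.2 - a.2)
          + g1 (v.1 - b.1) * (g1 (v.2 - a.2) - g1 (v.2 - b.2)) := by ring
    rw [h0]
    calc |(g1 (v.1 - a.1) - g1 (v.1 - b.1)) * g1 (v.2 - a.2)
          + g1 (v.1 - b.1) * (g1 (v.2 - a.2) - g1 (v.2 - b.2))|
        ≤ |(g1 (v.1 - a.1) - g1 (v.1 - b.1)) * g1 (v.2 - a.2)|
          + |g1 (v.1 - b.1) * (g1 (v.2 - a.2) - g1 (v.2 - b.2))| := abs_add_le _ _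
      _ = |g1 (v.1 - a.1) - g1 (v.1 - b.1)| * g1 (v.2 - a.2)
          + g1 (v.1 - b.1) * |g1 (v.2 - a.2) - g1 (v.2 - b.2)| := by
          rw [abs_mul, abs_mul, abs_of_nonneg (g1_nonneg _), abs_of_nonneg (g1_nonneg _)]
  -- main integral inequality
  have hmain : ∫ v : ℝ × ℝ,
      |g1 (v.1 - a.1) * g1 (v.2 - a.2) - g1 (v.1 - b.1) * g1 (v.2 - b.2)|
      ≤ (∫ x : ℝ, |g1 (x - a.1) - g1 (x - b.1)|) * Real.sqrt (2 * Real.pi)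
        + Real.sqrt (2 * Real.pi) * ∫ y : ℝ, |g1 (y - a.2) - g1 (y - b.2)| := by
    calc ∫ v : ℝ × ℝ,
        |g1 (v.1 - a.1) * g1 (v.2 - a.2) - g1 (v.1 - b.1) * g1 (v.2 - b.2)|
        ≤ ∫ v : ℝ × ℝ,
            (|g1 (v.1 - a.1) - g1 (v.1 - b.1)| * g1 (v.2 - a.2)
              + g1 (v.1 - b.1) * |g1 (v.2 - a.2) - g1 (v.2 - b.2)|) :=
          integral_mono Iabs (IG1.add IG2) hpt
      _ = (∫ v : ℝ × ℝ, |g1 (v.1 - a.1) - g1 (v.1 - b.1)| * g1 (v.2 - a.2))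
          + ∫ v : ℝ × ℝ, g1 (v.1 - b.1) * |g1 (v.2 - a.2) - g1 (v.2 - b.2)| :=
          integral_add IG1 IG2
      _ = (∫ x : ℝ, |g1 (x - a.1) - g1 (x - b.1)|) * Real.sqrt (2 * Real.pi)
          + Real.sqrt (2 * Real.pi) * ∫ y : ℝ, |g1 (y - a.2) - g1 (y - b.2)| := by
          rw [Measure.volume_eq_prod,
            integral_prod_mul (fun x : ℝ => |g1 (x - a.1) - g1 (x - b.1)|)
              (fun y : ℝ => g1 (y - a.2)),
            integral_prod_mul (fun x : ℝ => g1 (x - b.1))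
              (fun y : ℝ => |g1 (y - a.2) - g1 (y - b.2)|),
            g1_shift_total, g1_shift_total]
  have h1 := oneD a.1 b.1
  have h2 := oneD a.2 b.2
  have hS : (0:ℝ) < Real.sqrt (2 * Real.pi) :=
    Real.sqrt_pos.mpr (by positivity)
  have hSsq : Real.sqrt (2 * Real.pi) * Real.sqrt (2 * Real.pi) = 2 * Real.pi :=
    Real.mul_self_sqrt (by positivity)
  have hpi : (0:ℝ) < 2 * Real.pi := by positivity
  rw [integral_const_mul]
  have step : ∫ v : ℝ × ℝ,
      |g1 (v.1 - a.1) * g1 (v.2 - a.2) - g1 (v.1 - b.1) * g1 (v.2 - b.2)|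
      ≤ 2 * |a.1 - b.1| * Real.sqrt (2 * Real.pi)
        + Real.sqrt (2 * Real.pi) * (2 * |a.2 - b.2|) := by
    refine hmain.trans ?_
    have c1 := mul_le_mul_of_nonneg_right h1 hS.le
    have c2 := mul_le_mul_of_nonneg_left h2 hS.le
    linarith
  calc (1 / (2 * Real.pi)) * ∫ v : ℝ × ℝ,
        |g1 (v.1 - a.1) * g1 (v.2 - a.2) - g1 (v.1 - b.1) * g1 (v.2 - b.2)|
      ≤ (1 / (2 * Real.pi)) *
          (2 * |a.1 - b.1| * Real.sqrt (2 * Real.pi)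
            + Real.sqrt (2 * Real.pi) * (2 * |a.2 - b.2|)) := by
        apply mul_le_mul_of_nonneg_left step (by positivity)
    _ = (2 / Real.sqrt (2 * Real.pi)) * (|a.1 - b.1| + |a.2 - b.2|) := by
        rw [← hSsq]
        field_simp
        ring_nf
        rw [Real.sqrt_sq (Real.sqrt_nonneg _)]
end
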